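/- Let G be a finite simple graph without isolated vertices. If G has a minimum dominating set D and an independent set S such that every vertex of D ∖ S has a neighbor in S ∖ D (i.e., S ∖ D dominates D ∖ S), then γ⁻¹(G) ≤ α(G). -/

import Mathlib

/-- `D` is a dominating set of `G`: every vertex lies in `D` or has a neighbor in `D`. -/
def IsDomSet {V : Type*} (G : SimpleGraph V) (D : Set V) : Prop :=
  ∀ v : V, v ∈ D ∨ ∃ u ∈ D, G.Adj u v

/-- `S` is an independent set of `G`. -/
def IsIndep {V : Type*} (G : SimpleGraph V) (S : Set V) : Prop :=
  S.Pairwise fun u v => ¬ G.Adj u v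

/-- The domination number of `G`: the minimum size of a dominating set. -/
noncomputable def gamma {V : Type*} (G : SimpleGraph V) : ℕ :=
  sInf {n | ∃ D : Set V, IsDomSet G D ∧ D.ncard = n}

/-- The independence number of `G`: the maximum size of an independent set. -/
noncomputable def alpha {V : Type*} (G : SimpleGraph V) : ℕ :=
  sSup {n | ∃ S : Set V, IsIndep G S ∧ S.ncard = n}

/-- The inverse domination number of `G`: the minimum size of a dominating set
disjoint from some minimum dominating set. -/
noncomputable def invGamma {V : Type*} (G : SimpleGraph V) : ℕ :=
  sInf {n | ∃ D T : Set V, IsDomSet G D ∧ D.ncard = gamma G ∧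
    IsDomSet G T ∧ D ∩ T = ∅ ∧ T.ncard = n}

/-- The independence number of the subgraph of `G` induced by `D`. -/
noncomputable def alphaOn {V : Type*} (G : SimpleGraph V) (D : Set V) : ℕ :=
  sSup {n | ∃ S : Set V, S ⊆ D ∧ IsIndep G S ∧ S.ncard = n}

/-- The number of edges of the subgraph of `G` induced by `D`. -/
noncomputable def edgeCountOn {V : Type*} (G : SimpleGraph V) (D : Set V) : ℕ :=
  {e ∈ G.edgeSet | ∀ v ∈ e, v ∈ D}.ncard

/-- `D` is an optimal dominating set: of minimum size; among those, `G[D]` has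
maximum independence number; and subject to that, `G[D]` has fewest edges. -/
def IsOptimalDomSet {V : Type*} (G : SimpleGraph V) (D : Set V) : Prop :=
  IsDomSet G D ∧ D.ncard = gamma G ∧
  (∀ D' : Set V, IsDomSet G D' → D'.ncard = gamma G → alphaOn G D' ≤ alphaOn G D) ∧
  (∀ D' : Set V, IsDomSet G D' → D'.ncard = gamma G →
    alphaOn G D' = alphaOn G D → edgeCountOn G D ≤ edgeCountOn G D')

/-- `w` is a private neighbor of `v` with respect to `D`: `w ∉ D` and `N(w) ∩ D = {v}`. -/
def IsPrivateNbr {V : Type*} (G : SimpleGraph V) (D : Set V) (v w : V) : Prop :=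
  w ∉ D ∧ G.Adj v w ∧ ∀ u ∈ D, G.Adj u w → u = v

/-- `R` is a partial independent set of representatives (partial ISR) for the family `P`:
an independent set consisting of distinct representatives of some subfamily of `P`. -/
def IsPartialISR {V : Type*} (G : SimpleGraph V) {n : ℕ} (P : Fin n → Set V)
    (R : Set V) : Prop :=
  IsIndep G R ∧ ∃ (J : Set (Fin n)) (x : Fin n → V),
    Set.InjOn x J ∧ (∀ j ∈ J, x j ∈ P j) ∧ R = x '' J

/-- `b(G)`: the largest number of vertices of an induced bipartite subgraph of `G`. -/
noncomputable def bipNum {V : Type*} (G : SimpleGraph V) : ℕ :=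
  sSup {n | ∃ B A : Set V, A ⊆ B ∧ IsIndep G A ∧ IsIndep G (B \ A) ∧ B.ncard = n}

theorem inverse_domination_of_indep_dominating {V : Type*} [Fintype V] (G : SimpleGraph V)
    (hiso : ∀ v : V, ∃ u, G.Adj v u)
    (D : Set V) (hDdom : IsDomSet G D) (hDmin : D.ncard = gamma G)
    (S : Set V) (hSind : IsIndep G S)
    (hSdom : ∀ v ∈ D \ S, ∃ u ∈ S \ D, G.Adj u v) :
    invGamma G ≤ alpha G := by
  classical
  set A : Set V := S \ D with hA
  have hAind : IsIndep G A := hSind.mono (Set.diff_subset)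
  -- every vertex of D has a neighbor outside D (by minimality of D)
  have hout : ∀ u ∈ D, ∃ w, w ∉ D ∧ G.Adj u w := by
    intro u hu
    by_contra h
    push_neg at h
    have hdom' : IsDomSet G (D \ {u}) := by
      intro v
      by_cases hv : v = u
      · subst hv
        obtain ⟨x, hx⟩ := hiso v
        have hxD : x ∈ D := by
          by_contra hxD
          exact h x hxD hx
        right
        exact ⟨x, ⟨hxD, fun hxu => G.ne_of_adj hx (Set.mem_singleton_iff.mp hxu).symm⟩, hx.symm⟩
      · rcases hDdom v with hvD | ⟨x, hxD, hxv⟩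
        · exact Or.inl ⟨hvD, hv⟩
        · by_cases hxu : x = u
          · subst hxu
            by_cases hvD : v ∈ D
            · exact Or.inl ⟨hvD, hv⟩
            · exact absurd hxv (h v hvD)
          · exact Or.inr ⟨x, ⟨hxD, hxu⟩, hxv⟩
    have hle : gamma G ≤ (D \ {u}).ncard := Nat.sInf_le ⟨_, hdom', rfl⟩
    have hcard : (D \ {u}).ncard = D.ncard - 1 :=
      Set.ncard_diff_singleton_of_mem hu
    have hpos : 0 < D.ncard := (Set.ncard_pos (Set.toFinite D)).mpr ⟨u, hu⟩
    omega
  -- a maximal independent set I of G - D containing A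
  obtain ⟨I, ⟨hAI, hID, hIind⟩, hImax⟩ :=
    Set.Finite.exists_maximalFor id {J : Set V | A ⊆ J ∧ J ∩ D = ∅ ∧ IsIndep G J}
      (Set.toFinite _)
      ⟨A, subset_rfl, Set.diff_inter_self, hAind⟩
  -- maximal means dominating outside D
  have hIdom : ∀ v, v ∉ D → v ∈ I ∨ ∃ x ∈ I, G.Adj x v := by
    intro v hvD
    by_contra h
    push_neg at h
    obtain ⟨hvI, hnadj⟩ := h
    have hJ : insert v I ∈ {J : Set V | A ⊆ J ∧ J ∩ D = ∅ ∧ IsIndep G J} := by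
      refine ⟨hAI.trans (Set.subset_insert _ _), ?_, ?_⟩
      · ext x
        simp only [Set.mem_inter_iff, Set.mem_insert_iff, Set.mem_empty_iff_false,
          iff_false, not_and]
        rintro (rfl | hxI)
        · exact hvD
        · intro hxD
          exact Set.eq_empty_iff_forall_notMem.mp hID x ⟨hxI, hxD⟩
      · intro a ha b hb hab
        rcases Set.mem_insert_iff.mp ha with rfl | haI <;>
          rcases Set.mem_insert_iff.mp hb with rfl | hbI
        · exact absurd rfl hab
        · exact fun h => hnadj b hbI h.symm
        · exact fun h => hnadj a haI h
        · exact hIind haI hbI hab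
    have := hImax hJ (Set.subset_insert v I)
    simp only [id] at this
    exact hvI (this (Set.mem_insert v I))
  -- bad vertices of D ∩ S : not dominated by I
  set B : Set V := {u | u ∈ D ∧ u ∈ S ∧ ∀ x ∈ I, ¬ G.Adj x u} with hB
  -- representative choice
  have hrep : ∀ u ∈ B, ∃ w, w ∉ D ∧ G.Adj u w := fun u hu => hout u hu.1
  choose f hf using fun (u : V) (hu : u ∈ B) => hrep u hu
  set F : Set V := (fun u => if h : u ∈ B then f u h else u) '' B with hF
  set T : Set V := I ∪ F with hT
  -- I ∪ B is independent
  have hZind : IsIndep G (I ∪ B) := by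
    intro a ha b hb hab
    rcases ha with haI | haB <;> rcases hb with hbI | hbB
    · exact hIind haI hbI hab
    · exact fun h => hbB.2.2 a haI h
    · exact fun h => haB.2.2 b hbI h.symm
    · exact hSind haB.2.1 hbB.2.1 hab
  have hZalpha : (I ∪ B).ncard ≤ alpha G := by
    apply le_csSup
    · refine ⟨Fintype.card V, ?_⟩
      rintro n ⟨s, _, rfl⟩
      calc s.ncard ≤ (Set.univ : Set V).ncard :=
            Set.ncard_le_ncard (Set.subset_univ _) Set.finite_univ
        _ = Fintype.card V := by rw [Set.ncard_univ, Nat.card_eq_fintype_card]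
    · exact ⟨I ∪ B, hZind, rfl⟩
  -- |T| ≤ |I ∪ B|
  have hIB_disj : Disjoint I B := by
    rw [Set.disjoint_iff_forall_ne]
    rintro a haI b hbB rfl
    exact Set.eq_empty_iff_forall_notMem.mp hID a ⟨haI, hbB.1⟩
  have hTcard : T.ncard ≤ (I ∪ B).ncard := by
    calc T.ncard ≤ I.ncard + F.ncard := Set.ncard_union_le _ _
      _ ≤ I.ncard + B.ncard :=
          Nat.add_le_add_left (Set.ncard_image_le (Set.toFinite B)) I.ncard
      _ = (I ∪ B).ncard := (Set.ncard_union_eq hIB_disj (Set.toFinite _) (Set.toFinite _)).symm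
  -- T avoids D
  have hTD : ∀ x ∈ T, x ∉ D := by
    rintro x (hxI | hxF)
    · exact fun hxD => Set.eq_empty_iff_forall_notMem.mp hID x ⟨hxI, hxD⟩
    · obtain ⟨u, huB, rfl⟩ := hxF
      show (if h : u ∈ B then f u h else u) ∉ D
      rw [dif_pos huB]
      exact (hf u huB).1
  -- T is dominating
  have hTdom : IsDomSet G T := by
    intro v
    by_cases hvD : v ∈ D
    · by_cases hvB : v ∈ B
      · right
        refine ⟨(fun u => if h : u ∈ B then f u h else u) v, Or.inr ⟨v, hvB, rfl⟩, ?_⟩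
        show G.Adj (if h : v ∈ B then f v h else v) v
        rw [dif_pos hvB]
        exact (hf v hvB).2.symm
      · by_cases hvS : v ∈ S
        · have : ¬ ∀ x ∈ I, ¬ G.Adj x v := fun h => hvB ⟨hvD, hvS, h⟩
          push_neg at this
          obtain ⟨x, hxI, hxv⟩ := this
          exact Or.inr ⟨x, Or.inl hxI, hxv⟩
        · obtain ⟨u, huSD, huv⟩ := hSdom v ⟨hvD, hvS⟩
          exact Or.inr ⟨u, Or.inl (hAI huSD), huv⟩
    · rcases hIdom v hvD with hvI | ⟨x, hxI, hxv⟩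
      · exact Or.inl (Or.inl hvI)
      · exact Or.inr ⟨x, Or.inl hxI, hxv⟩
  have hDT : D ∩ T = ∅ := by
    ext x
    simp only [Set.mem_inter_iff, Set.mem_empty_iff_false, iff_false, not_and]
    exact fun hxD hxT => hTD x hxT hxD
  have hmem : T.ncard ∈ {n | ∃ D' T' : Set V, IsDomSet G D' ∧ D'.ncard = gamma G ∧
      IsDomSet G T' ∧ D' ∩ T' = ∅ ∧ T'.ncard = n} :=
    ⟨D, T, hDdom, hDmin, hTdom, hDT, rfl⟩
  calc invGamma G ≤ T.ncard := Nat.sInf_le hmem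
    _ ≤ (I ∪ B).ncard := hTcard
    _ ≤ alpha G := hZalpha
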